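/- Let φ : H ⥤q G be a prefunctor of quivers where G is finite (G has finitely many vertices and, for each pair of vertices, finitely many edges). Then the induced functor Paths H ⥤ Paths G between free categories is finitary if and only if H is finite (H has finitely many vertices and finitely many edges in total). -/

import Mathlib

open CategoryTheory

universe v u v' u'

/-- A functor `p : D ⥤ C` is finitary if its fibers over objects and over morphisms
are all finite. -/
def IsFinitary {D : Type u} {C : Type u'} [Category.{v} D] [Category.{v'} C]
    (p : D ⥤ C) : Prop :=
  (∀ A : C, { X : D | p.obj X = A }.Finite) ∧
    ∀ (A B : C) (w : A ⟶ B),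
      { t : Σ (X : D) (Y : D), X ⟶ Y |
        ∃ (hX : p.obj t.1 = A) (hY : p.obj t.2.1 = B),
          p.map t.2.2 = eqToHom hX ≫ w ≫ eqToHom hY.symm }.Finite

/-- The functor between free categories induced by a prefunctor of quivers,
sending each path to its image path. -/
def pathsFunctor {H : Type u} {G : Type u'} [Quiver.{v + 1} H] [Quiver.{v' + 1} G]
    (φ : H ⥤q G) : Paths H ⥤ Paths G where
  obj X := φ.obj X
  map f := φ.mapPath f
  map_id _ := rfl
  map_comp f g := φ.mapPath_comp f g

open Quiver in
lemma aux_length_mapPath {H : Type u} {G : Type u'} [Quiver.{v + 1} H] [Quiver.{v' + 1} G]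
    (φ : H ⥤q G) {a b : H} (p : Path a b) : (φ.mapPath p).length = p.length := by
  induction p with
  | nil => rfl
  | cons p e ih => simp [Prefunctor.mapPath_cons, ih]

open Quiver in
lemma aux_length_conj {G : Type u'} [Quiver.{v' + 1} G] {A B A' B' : Paths G}
    (hA : A' = A) (hB : B' = B) (w : A ⟶ B) :
    Quiver.Path.length (eqToHom hA ≫ w ≫ eqToHom hB.symm : A' ⟶ B') = Quiver.Path.length w := by
  subst hA; subst hB; simp

open Quiver in
lemma aux_finite_paths_le {H : Type u} [Quiver.{v + 1} H] [Finite H]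
    [Finite (Σ a b : H, a ⟶ b)] (n : ℕ) :
    {t : Σ X Y : H, Path X Y | t.2.2.length ≤ n}.Finite := by
  induction n with
  | zero =>
    apply Set.Finite.subset (Set.finite_range (fun X : H => (⟨X, X, Path.nil⟩ : Σ X Y : H, Path X Y)))
    rintro ⟨X, Y, p⟩ hp
    cases p with
    | nil => exact ⟨X, rfl⟩
    | cons q e => simp [Path.length_cons] at hp
  | succ n ih =>
    classical
    set F : (Σ X Y : H, Path X Y) × (Σ a b : H, a ⟶ b) → Σ X Y : H, Path X Y :=
      fun x => if h : x.1.2.1 = x.2.1 then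
          ⟨x.1.1, x.2.2.1, (x.1.2.2.cast rfl h).cons x.2.2.2⟩ else x.1 with hF
    apply Set.Finite.subset (Set.Finite.union ((ih.prod Set.finite_univ).image F)
      (Set.finite_range (fun X : H => (⟨X, X, Path.nil⟩ : Σ X Y : H, Path X Y))))
    rintro ⟨X, Y, p⟩ hp
    cases p with
    | nil => exact Or.inr ⟨X, rfl⟩
    | cons q e =>
      left
      refine ⟨⟨⟨X, _, q⟩, ⟨_, Y, e⟩⟩, ⟨?_, Set.mem_univ _⟩, ?_⟩
      · simpa [Path.length_cons] using Nat.lt_succ_iff.mp (Nat.lt_of_lt_of_le (Nat.lt_succ_self _) hp)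
      · simp [hF, Path.cast_rfl_rfl]

/-- For a prefunctor `φ : H ⥤q G` into a finite quiver `G`, the induced functor
`Paths H ⥤ Paths G` is finitary iff the quiver `H` is finite (finitely many vertices and
finitely many edges in total). -/
theorem pathsFunctor_isFinitary_iff {H : Type u} {G : Type u'}
    [Quiver.{v + 1} H] [Quiver.{v' + 1} G] [Finite G] [∀ a b : G, Finite (a ⟶ b)]
    (φ : H ⥤q G) :
    IsFinitary (pathsFunctor φ) ↔ (Finite H ∧ Finite (Σ (a : H) (b : H), a ⟶ b)) := by
  constructor
  · rintro ⟨h1, h2⟩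
    haveI : Finite (Paths G) := ‹Finite G›
    constructor
    · have hsub : (Set.univ : Set (Paths H)) ⊆
          ⋃ A : G, {X : Paths H | (pathsFunctor φ).obj X = A} := by
        intro X _
        exact Set.mem_iUnion.2 ⟨φ.obj X, rfl⟩
      have : Finite (Paths H) :=
        Set.finite_univ_iff.mp (Set.Finite.subset (Set.finite_iUnion fun A => h1 A) hsub)
      exact this
    · -- edges
      haveI : Finite (Σ A B : G, A ⟶ B) := inferInstance
      set S : Set (Σ X Y : Paths H, X ⟶ Y) :=
        ⋃ f : Σ A B : G, A ⟶ B,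
          { t : Σ X Y : Paths H, X ⟶ Y |
            ∃ (hX : (pathsFunctor φ).obj t.1 = (Paths.of G).obj f.1)
              (hY : (pathsFunctor φ).obj t.2.1 = (Paths.of G).obj f.2.1),
              (pathsFunctor φ).map t.2.2 =
                eqToHom hX ≫ (Paths.of G).map f.2.2 ≫ eqToHom hY.symm }
        with hS
      have hSfin : S.Finite :=
        Set.finite_iUnion fun f : Σ A B : G, A ⟶ B => h2 _ _ ((Paths.of G).map f.2.2)
      have hmem : ∀ e : Σ a b : H, a ⟶ b,
          (⟨e.1, e.2.1, e.2.2.toPath⟩ : Σ X Y : Paths H, X ⟶ Y) ∈ S := by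
        rintro ⟨a, b, e⟩
        refine Set.mem_iUnion.2 ⟨⟨φ.obj a, φ.obj b, φ.map e⟩, rfl, rfl, ?_⟩
        show φ.mapPath e.toPath = _
        rw [Prefunctor.mapPath_toPath]
        simp [Paths.of]
        rfl
      haveI : Finite ↥S := hSfin
      apply Finite.of_injective (fun e : Σ a b : H, a ⟶ b =>
        (⟨⟨e.1, e.2.1, e.2.2.toPath⟩, hmem e⟩ : ↥S))
      rintro ⟨a, b, e⟩ ⟨a', b', e'⟩ h
      simp only [Subtype.mk.injEq] at h
      obtain ⟨rfl, h⟩ := Sigma.mk.inj_iff.mp h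
      rw [heq_eq_eq] at h
      obtain ⟨rfl, h⟩ := Sigma.mk.inj_iff.mp h
      rw [heq_eq_eq] at h
      simp only [Quiver.Hom.toPath] at h
      injection h with h1 h2 h3 h4
      rw [h4]
  · rintro ⟨hH, hE⟩
    haveI : Finite (Paths H) := hH
    haveI : Finite (Σ a b : H, a ⟶ b) := hE
    constructor
    · intro A
      exact Set.toFinite _
    · intro A B w
      apply Set.Finite.subset (aux_finite_paths_le (H := H) (Quiver.Path.length w))
      rintro ⟨X, Y, p⟩ ⟨hX, hY, heq⟩
      have hlen : Quiver.Path.length ((pathsFunctor φ).map (X := X) (Y := Y) p)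
          = Quiver.Path.length w := by
        rw [heq]; exact aux_length_conj hX hY w
      have : (φ.mapPath p).length = Quiver.Path.length w := hlen
      rw [aux_length_mapPath] at this
      exact le_of_eq this
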